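/- Let L ≥ 1, K_B > 0, and for s ∈ {1,…,L} let m_s > 0, n_s > 0, ν_s > 0, T_s > 0, u_s ∈ ℝ³, and let f_s : ℝ³ → ℝ be integrable with ∫ f_s(v) dv = n_s and ∫ v f_s(v) dv = n_s u_s, where each component of v f_s is integrable. Define ū = (Σ_s ν_s m_s n_s u_s)/(Σ_s ν_s m_s n_s), T̄ = (Σ_s ν_s n_s (m_s(|u_s|² − |ū|²) + 3K_B T_s))/(3K_B Σ_s ν_s n_s), and the Maxwellian M(v; a, b) = (2πb)^{−3/2} exp(−|v−a|²/(2b)) for a ∈ ℝ³, b > 0. Then the GS relaxation operators conserve total momentum: Σ_{s=1}^L ∫ m_s v ν_s ( n_s M(v; ū, K_B T̄/m_s) − f_s(v) ) dv = 0 in ℝ³. -/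

import Mathlib

open scoped BigOperators
open MeasureTheory

section GSAux
open Real

local notation "E3" => EuclideanSpace ℝ (Fin 3)

private lemma gauss_integrable {b : ℝ} (hb : 0 < b) :
    Integrable (fun v : E3 => Real.exp (-b * ‖v‖ ^ 2)) := by
  have h := (GaussianFourier.integrable_cexp_neg_mul_sq_norm_add (V := E3) (b := (b:ℂ))
    (by simpa using hb) 0 0).norm
  refine h.congr (Filter.Eventually.of_forall fun v => ?_)
  simp
  norm_cast
  exact Real.norm_of_nonneg (Real.exp_pos _).le

private lemma gauss_integral {b : ℝ} (hb : 0 < b) :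
    ∫ v : E3, Real.exp (-b * ‖v‖ ^ 2) = (π / b) ^ ((3:ℝ) / 2) := by
  rw [GaussianFourier.integral_rexp_neg_mul_sq_norm hb]
  norm_num

private lemma gauss_moment_zero {b : ℝ} (hb : 0 < b) :
    ∫ v : E3, Real.exp (-b * ‖v‖ ^ 2) • v = 0 := by
  have h : (∫ v : E3, Real.exp (-b * ‖v‖ ^ 2) • v)
      = - ∫ v : E3, Real.exp (-b * ‖v‖ ^ 2) • v := by
    conv_lhs => rw [← integral_neg_eq_self]
    rw [← integral_neg]
    congr 1 with v
    simp
  have h2 : (∫ v : E3, Real.exp (-b * ‖v‖ ^ 2) • v)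
      + (∫ v : E3, Real.exp (-b * ‖v‖ ^ 2) • v) = 0 := by
    nth_rewrite 2 [h]; abel
  have h3 := smul_eq_zero.mp (show (2:ℝ) • (∫ v : E3, Real.exp (-b * ‖v‖ ^ 2) • v) = 0 by
    rw [two_smul]; exact h2)
  simpa using h3

private lemma gauss_smul_integrable {b : ℝ} (hb : 0 < b) :
    Integrable (fun v : E3 => Real.exp (-b * ‖v‖ ^ 2) • v) := by
  have hb2 : 0 < b / 2 := by linarith
  set C : ℝ := 1 / (2 * Real.sqrt (b / 2)) with hC
  refine Integrable.mono' ((gauss_integrable hb2).const_mul C)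
    (Continuous.aestronglyMeasurable (by fun_prop)) (Filter.Eventually.of_forall fun v => ?_)
  rw [norm_smul, Real.norm_eq_abs, abs_exp]
  have hs : Real.sqrt (b / 2) ^ 2 = b / 2 := Real.sq_sqrt hb2.le
  have hspos : 0 < Real.sqrt (b / 2) := Real.sqrt_pos.mpr hb2
  have key : ‖v‖ ≤ C * Real.exp (b / 2 * ‖v‖ ^ 2) := by
    have h1 : 1 + b / 2 * ‖v‖ ^ 2 ≤ Real.exp (b / 2 * ‖v‖ ^ 2) := by
      have := Real.add_one_le_exp (b / 2 * ‖v‖ ^ 2); linarith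
    have h2 : ‖v‖ ≤ C * (1 + b / 2 * ‖v‖ ^ 2) := by
      rw [hC]
      rw [div_mul_eq_mul_div, le_div_iff₀ (by positivity)]
      nlinarith [sq_nonneg (Real.sqrt (b / 2) * ‖v‖ - 1)]
    calc ‖v‖ ≤ C * (1 + b / 2 * ‖v‖ ^ 2) := h2
      _ ≤ C * Real.exp (b / 2 * ‖v‖ ^ 2) := by
          apply mul_le_mul_of_nonneg_left h1 (by positivity)
  calc Real.exp (-b * ‖v‖ ^ 2) * ‖v‖
      ≤ Real.exp (-b * ‖v‖ ^ 2) * (C * Real.exp (b / 2 * ‖v‖ ^ 2)) := by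
        exact mul_le_mul_of_nonneg_left key (by positivity)
    _ = C * Real.exp (-(b / 2) * ‖v‖ ^ 2) := by
        rw [mul_left_comm, ← Real.exp_add]; ring_nf

private lemma arg_eq {b : ℝ} (hb : 0 < b) (w : E3) :
    -‖w‖ ^ 2 / (2 * b) = -(1 / (2 * b)) * ‖w‖ ^ 2 := by ring

private lemma const_cancel {b : ℝ} (hb : 0 < b) :
    (2 * π * b) ^ (-(3:ℝ)/2) * (π / (1 / (2 * b))) ^ ((3:ℝ) / 2) = 1 := by
  have h1 : π / (1 / (2 * b)) = 2 * π * b := by field_simp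
  rw [h1, ← Real.rpow_add (by positivity)]
  norm_num

private lemma maxwell_integrable {b : ℝ} (hb : 0 < b) (a : E3) :
    Integrable (fun v : E3 => (2 * π * b) ^ (-(3:ℝ)/2) * Real.exp (-‖v - a‖ ^ 2 / (2 * b))) := by
  have hβ : 0 < 1 / (2 * b) := by positivity
  simp_rw [arg_eq hb]
  exact (((gauss_integrable hβ).comp_sub_right a).const_mul _)

private lemma maxwell_integral {b : ℝ} (hb : 0 < b) (a : E3) :
    ∫ v : E3, (2 * π * b) ^ (-(3:ℝ)/2) * Real.exp (-‖v - a‖ ^ 2 / (2 * b)) = 1 := by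
  have hβ : 0 < 1 / (2 * b) := by positivity
  simp_rw [arg_eq hb]
  rw [MeasureTheory.integral_const_mul,
    integral_sub_right_eq_self (fun w : E3 => Real.exp (-(1 / (2 * b)) * ‖w‖ ^ 2)) a,
    gauss_integral hβ, const_cancel hb]

private lemma maxwell_smul_integrable {b : ℝ} (hb : 0 < b) (a : E3) :
    Integrable (fun v : E3 =>
      ((2 * π * b) ^ (-(3:ℝ)/2) * Real.exp (-‖v - a‖ ^ 2 / (2 * b))) • v) := by
  have hβ : 0 < 1 / (2 * b) := by positivity
  have h1 : Integrable (fun v : E3 => Real.exp (-(1 / (2 * b)) * ‖v - a‖ ^ 2) • (v - a)) :=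
    (gauss_smul_integrable hβ).comp_sub_right a
  have h2 : Integrable (fun v : E3 => Real.exp (-(1 / (2 * b)) * ‖v - a‖ ^ 2) • a) :=
    ((gauss_integrable hβ).comp_sub_right a).smul_const a
  have h3 := (h1.add h2).smul ((2 * π * b) ^ (-(3:ℝ)/2))
  refine h3.congr (Filter.Eventually.of_forall fun v => ?_)
  simp only [Pi.add_apply, Pi.smul_apply, smul_add, arg_eq hb]
  module

private lemma maxwell_moment {b : ℝ} (hb : 0 < b) (a : E3) :
    ∫ v : E3, ((2 * π * b) ^ (-(3:ℝ)/2) * Real.exp (-‖v - a‖ ^ 2 / (2 * b))) • v = a := by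
  have hβ : 0 < 1 / (2 * b) := by positivity
  have h1 : Integrable (fun w : E3 => Real.exp (-(1 / (2 * b)) * ‖w‖ ^ 2) • w) :=
    gauss_smul_integrable hβ
  have h2 : Integrable (fun w : E3 => Real.exp (-(1 / (2 * b)) * ‖w‖ ^ 2) • a) :=
    (gauss_integrable hβ).smul_const a
  have key : (fun v : E3 => ((2 * π * b) ^ (-(3:ℝ)/2) * Real.exp (-‖v - a‖ ^ 2 / (2 * b))) • v)
      = fun v : E3 => ((2 * π * b) ^ (-(3:ℝ)/2) : ℝ) •
        (Real.exp (-(1 / (2 * b)) * ‖v - a‖ ^ 2) • (v - a)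
          + Real.exp (-(1 / (2 * b)) * ‖v - a‖ ^ 2) • a) := by
    funext v
    rw [arg_eq hb]; module
  rw [key, integral_smul,
    integral_sub_right_eq_self (fun w : E3 =>
      Real.exp (-(1 / (2 * b)) * ‖w‖ ^ 2) • w + Real.exp (-(1 / (2 * b)) * ‖w‖ ^ 2) • a) a,
    integral_add h1 h2, gauss_moment_zero hβ, zero_add, integral_smul_const,
    gauss_integral hβ]
  rw [smul_smul, const_cancel hb, one_smul]

private lemma weighted_cs {L : ℕ} (w : Fin L → ℝ) (hw : ∀ s, 0 ≤ w s) (u : Fin L → E3) :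
    ‖∑ s, w s • u s‖ ^ 2 ≤ (∑ s, w s) * ∑ s, w s * ‖u s‖ ^ 2 := by
  have h1 : ‖∑ s, w s • u s‖ ≤ ∑ s, w s * ‖u s‖ := by
    refine (norm_sum_le _ _).trans_eq (Finset.sum_congr rfl fun s _ => ?_)
    rw [norm_smul, Real.norm_eq_abs, abs_of_nonneg (hw s)]
  have h2 : (∑ s, w s * ‖u s‖) ^ 2 ≤ (∑ s, w s) * ∑ s, w s * ‖u s‖ ^ 2 := by
    have hcs := Finset.sum_mul_sq_le_sq_mul_sq Finset.univ (fun s => Real.sqrt (w s))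
      (fun s => Real.sqrt (w s) * ‖u s‖)
    calc (∑ s, w s * ‖u s‖) ^ 2
        = (∑ s, Real.sqrt (w s) * (Real.sqrt (w s) * ‖u s‖)) ^ 2 := by
          congr 1; refine Finset.sum_congr rfl fun s _ => ?_
          rw [← mul_assoc, Real.mul_self_sqrt (hw s)]
      _ ≤ (∑ s, Real.sqrt (w s) ^ 2) * ∑ s, (Real.sqrt (w s) * ‖u s‖) ^ 2 := hcs
      _ = (∑ s, w s) * ∑ s, w s * ‖u s‖ ^ 2 := by
          congr 1
          · exact Finset.sum_congr rfl fun s _ => Real.sq_sqrt (hw s)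
          · refine Finset.sum_congr rfl fun s _ => ?_
            rw [mul_pow, Real.sq_sqrt (hw s)]
  exact (pow_le_pow_left₀ (norm_nonneg _) h1 2).trans h2

theorem gs_total_momentum_conservation
    (L : ℕ) (hL : 1 ≤ L) (KB : ℝ) (hKB : 0 < KB)
    (m n ν T : Fin L → ℝ) (u : Fin L → EuclideanSpace ℝ (Fin 3))
    (hm : ∀ s, 0 < m s) (hn : ∀ s, 0 < n s) (hν : ∀ s, 0 < ν s) (hT : ∀ s, 0 < T s)
    (f : Fin L → EuclideanSpace ℝ (Fin 3) → ℝ)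
    (hfint : ∀ s, Integrable (f s))
    (hfvint : ∀ s, Integrable (fun v => f s v • v))
    (hf0 : ∀ s, ∫ v, f s v = n s)
    (hf1 : ∀ s, (∫ v, f s v • v) = n s • u s)
    (Mx : EuclideanSpace ℝ (Fin 3) → EuclideanSpace ℝ (Fin 3) → ℝ → ℝ)
    (hMx : ∀ v a b, Mx v a b = (2 * Real.pi * b) ^ (-(3 : ℝ) / 2)
      * Real.exp (-‖v - a‖ ^ 2 / (2 * b)))
    (ubar : EuclideanSpace ℝ (Fin 3))
    (hubar : ubar = (1 / ∑ s, ν s * m s * n s) • ∑ s, (ν s * m s * n s) • u s)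
    (Tbar : ℝ)
    (hTbar : Tbar = (∑ s, ν s * n s * (m s * (‖u s‖ ^ 2 - ‖ubar‖ ^ 2) + 3 * KB * T s))
      / (3 * KB * ∑ s, ν s * n s)) :
    ∑ s, (∫ v, (m s * (ν s * (n s * Mx v ubar (KB * Tbar / m s) - f s v))) • v)
      = (0 : EuclideanSpace ℝ (Fin 3)) := by
  haveI : Nonempty (Fin L) := ⟨⟨0, hL⟩⟩
  set W : ℝ := ∑ s, ν s * m s * n s with hW
  have hWpos : 0 < W :=
    Finset.sum_pos (fun s _ => by have h1 := hν s; have h2 := hm s; have h3 := hn s; have h4 := hT s; positivity) Finset.univ_nonempty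
  -- Tbar is positive
  have hTbarpos : 0 < Tbar := by
    have hcs := weighted_cs (fun s => ν s * m s * n s)
      (fun s => by have h1 := hν s; have h2 := hm s; have h3 := hn s; exact (by positivity : (0:ℝ) ≤ ν s * m s * n s)) u
    have hub2 : ‖ubar‖ ^ 2 ≤ (1 / W) * ∑ s, (ν s * m s * n s) * ‖u s‖ ^ 2 := by
      rw [hubar, norm_smul, mul_pow, Real.norm_eq_abs, abs_of_pos (by positivity : (0:ℝ) < 1 / W)]
      calc (1 / W) ^ 2 * ‖∑ s, (ν s * m s * n s) • u s‖ ^ 2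
          ≤ (1 / W) ^ 2 * (W * ∑ s, (ν s * m s * n s) * ‖u s‖ ^ 2) := by
            exact mul_le_mul_of_nonneg_left hcs (by positivity)
        _ = (1 / W) * ∑ s, (ν s * m s * n s) * ‖u s‖ ^ 2 := by
            field_simp
    have hkey : W * ‖ubar‖ ^ 2 ≤ ∑ s, (ν s * m s * n s) * ‖u s‖ ^ 2 := by
      rw [mul_comm]
      calc ‖ubar‖ ^ 2 * W ≤ ((1 / W) * ∑ s, (ν s * m s * n s) * ‖u s‖ ^ 2) * W :=
            mul_le_mul_of_nonneg_right hub2 hWpos.le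
        _ = ∑ s, (ν s * m s * n s) * ‖u s‖ ^ 2 := by field_simp
    have hnum : 0 < ∑ s, ν s * n s * (m s * (‖u s‖ ^ 2 - ‖ubar‖ ^ 2) + 3 * KB * T s) := by
      have hsplit : ∑ s, ν s * n s * (m s * (‖u s‖ ^ 2 - ‖ubar‖ ^ 2) + 3 * KB * T s)
          = ((∑ s, (ν s * m s * n s) * ‖u s‖ ^ 2) - W * ‖ubar‖ ^ 2)
            + ∑ s, ν s * n s * (3 * KB * T s) := by
        rw [hW, Finset.sum_mul, ← Finset.sum_sub_distrib, ← Finset.sum_add_distrib]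
        refine Finset.sum_congr rfl fun s _ => by ring
      rw [hsplit]
      have hpos2 : 0 < ∑ s, ν s * n s * (3 * KB * T s) :=
        Finset.sum_pos (fun s _ => by have h1 := hν s; have h2 := hm s; have h3 := hn s; have h4 := hT s; positivity) Finset.univ_nonempty
      linarith
    have hden : 0 < 3 * KB * ∑ s, ν s * n s := by
      have : 0 < ∑ s, ν s * n s :=
        Finset.sum_pos (fun s _ => by have h1 := hν s; have h2 := hm s; have h3 := hn s; have h4 := hT s; positivity) Finset.univ_nonempty
      positivity
    rw [hTbar]
    positivity
  -- per-species integral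
  have hb : ∀ s : Fin L, 0 < KB * Tbar / m s := fun s => by
    have := hm s; positivity
  have hint : ∀ s : Fin L,
      (∫ v, (m s * (ν s * (n s * Mx v ubar (KB * Tbar / m s) - f s v))) • v)
        = (m s * ν s * n s) • ubar - (m s * ν s * n s) • u s := by
    intro s
    set b := KB * Tbar / m s with hbdef
    have hMv : Integrable (fun v : E3 => Mx v ubar b • v) := by
      have := maxwell_smul_integrable (hb s) ubar
      refine this.congr (Filter.Eventually.of_forall fun v => ?_)
      simp only [hMx, hbdef]
    have heq : (fun v : E3 => (m s * (ν s * (n s * Mx v ubar b - f s v))) • v)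
        = fun v : E3 => (m s * ν s * n s) • (Mx v ubar b • v)
          - (m s * ν s) • (f s v • v) := by
      funext v
      rw [smul_smul, smul_smul, ← sub_smul]
      congr 1
      ring
    have h1 : Integrable (fun v : E3 => (m s * ν s * n s) • (Mx v ubar b • v)) := hMv.smul (m s * ν s * n s)
    have h2 : Integrable (fun v : E3 => (m s * ν s) • (f s v • v)) := (hfvint s).smul (m s * ν s)
    rw [heq, integral_sub h1 h2, integral_smul, integral_smul]
    have hMom : (∫ v : E3, Mx v ubar b • v) = ubar := by
      rw [show (fun v : E3 => Mx v ubar b • v)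
          = fun v : E3 => ((2 * Real.pi * b) ^ (-(3:ℝ)/2)
            * Real.exp (-‖v - ubar‖ ^ 2 / (2 * b))) • v from funext fun v => by rw [hMx]]
      exact maxwell_moment (hb s) ubar
    rw [hMom, hf1 s, smul_smul]
  -- sum up
  calc ∑ s, (∫ v, (m s * (ν s * (n s * Mx v ubar (KB * Tbar / m s) - f s v))) • v)
      = ∑ s, ((ν s * m s * n s) • ubar - (ν s * m s * n s) • u s) := by
        refine Finset.sum_congr rfl fun s _ => ?_
        rw [hint s, show m s * ν s * n s = ν s * m s * n s from by ring]
    _ = W • ubar - ∑ s, (ν s * m s * n s) • u s := by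
        rw [Finset.sum_sub_distrib, ← Finset.sum_smul]
    _ = 0 := by
        rw [hubar, smul_smul, mul_one_div, div_self hWpos.ne', one_smul, sub_self]

end GSAux
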